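/- Let x ∈ L²(ℝ, ℂ) and let g : ℝ → ℂ be continuously differentiable with g ∈ L²(ℝ) and g' ∈ L²(ℝ). Then for every ω ∈ ℝ, the function t ↦ V^t_g x(t, ω) is differentiable on ℝ, and its derivative satisfies ∂/∂t V^t_g x(t, ω) = 2πiω · V^t_g x(t, ω) − V^t_{g'} x(t, ω). -/

import Mathlib

open MeasureTheory Complex Real
open scoped ENNReal

lemma l2mul {x h : ℝ → ℂ} (hx : MemLp x 2 (volume : Measure ℝ))
    (hh : MemLp h 2 (volume : Measure ℝ)) :
    Integrable (fun τ => x τ * h τ) volume := by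
  have h121 : (1 : ℝ≥0∞) / 1 = 1 / 2 + 1 / 2 := by
    rw [ENNReal.add_halves]; simp
  haveI : ENNReal.HolderTriple 2 2 1 := ⟨by simp only [← one_div]; exact h121.symm⟩
  have := MemLp.smul (μ := (volume : Measure ℝ)) (r := 1) hh hx
  rw [memLp_one_iff_integrable] at this
  exact this

lemma l2shift {h : ℝ → ℂ} (hh : MemLp h 2 (volume : Measure ℝ)) (s : ℝ) :
    MemLp (fun τ => h (τ - s)) 2 (volume : Measure ℝ) :=
  hh.comp_measurePreserving (measurePreserving_sub_right volume s)

lemma sqint {h : ℝ → ℂ} (hh : MemLp h 2 (volume : Measure ℝ)) :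
    Integrable (fun τ => ‖h τ‖ ^ 2) volume := by
  have := hh.integrable_norm_rpow two_ne_zero ENNReal.ofNat_ne_top
  simpa [ENNReal.toReal_ofNat, Real.rpow_natCast] using this

lemma prodInt {x Φ : ℝ → ℂ} (hx : MemLp x 2 (volume : Measure ℝ))
    (hΦc : Continuous Φ) (hΦ : MemLp Φ 2 (volume : Measure ℝ)) (a b : ℝ) :
    Integrable (fun p : ℝ × ℝ => x p.2 * Φ (p.2 - p.1))
      ((volume.restrict (Set.Ioc a b)).prod volume) := by
  haveI : IsFiniteMeasure ((volume : Measure ℝ).restrict (Set.Ioc a b)) :=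
    ⟨by rw [Measure.restrict_apply_univ]; exact measure_Ioc_lt_top⟩
  have hmeas : AEStronglyMeasurable (fun p : ℝ × ℝ => x p.2 * Φ (p.2 - p.1))
      ((volume.restrict (Set.Ioc a b)).prod volume) :=
    hx.1.comp_snd.mul ((hΦc.comp (continuous_snd.sub continuous_fst)).aestronglyMeasurable)
  refine (integrable_prod_iff hmeas).2 ⟨?_, ?_⟩
  · exact Filter.Eventually.of_forall fun s => l2mul hx (l2shift hΦ s)
  · have hx2 := sqint hx
    have hΦ2 := sqint hΦ
    set C : ℝ := (∫ τ, ‖x τ‖ ^ 2) / 2 + (∫ τ, ‖Φ τ‖ ^ 2) / 2 with hC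
    refine Integrable.mono' (integrable_const C) (hmeas.norm.integral_prod_right')
      (Filter.Eventually.of_forall fun s => ?_)
    have h1 : Integrable (fun τ => ‖Φ (τ - s)‖ ^ 2) volume := sqint (l2shift hΦ s)
    have hb : (∫ τ, ‖x τ * Φ (τ - s)‖) ≤ C := by
      have hle : (∫ τ, ‖x τ * Φ (τ - s)‖) ≤ ∫ τ, (‖x τ‖ ^ 2 / 2 + ‖Φ (τ - s)‖ ^ 2 / 2) := by
        refine integral_mono_of_nonneg (Filter.Eventually.of_forall fun τ => norm_nonneg _)
          ((hx2.div_const 2).add (h1.div_const 2))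
          (Filter.Eventually.of_forall fun τ => ?_)
        show ‖x τ * Φ (τ - s)‖ ≤ ‖x τ‖ ^ 2 / 2 + ‖Φ (τ - s)‖ ^ 2 / 2
        rw [norm_mul]
        nlinarith [sq_nonneg (‖x τ‖ - ‖Φ (τ - s)‖), norm_nonneg (x τ), norm_nonneg (Φ (τ - s))]
      have heq : (∫ τ, (‖x τ‖ ^ 2 / 2 + ‖Φ (τ - s)‖ ^ 2 / 2)) = C := by
        rw [integral_add (hx2.div_const 2) (h1.div_const 2), integral_div, integral_div, hC]
        congr 2
        exact integral_sub_right_eq_self (fun σ => ‖Φ σ‖ ^ 2) s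
      exact hle.trans (le_of_eq heq)
    calc ‖∫ τ, ‖x τ * Φ (τ - s)‖‖ = ∫ τ, ‖x τ * Φ (τ - s)‖ := by
          rw [Real.norm_of_nonneg (integral_nonneg fun τ => norm_nonneg _)]
      _ ≤ C := hb

lemma Gcont {x Φ : ℝ → ℂ} (hx : MemLp x 2 (volume : Measure ℝ))
    (hΦ : MemLp Φ 2 (volume : Measure ℝ)) :
    Continuous (fun s : ℝ => ∫ τ : ℝ, x τ * Φ (τ - s)) := by
  haveI : Fact ((1 : ℝ≥0∞) ≤ 2) := ⟨one_le_two⟩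
  have hmp : ∀ s : ℝ, MeasurePreserving (fun τ : ℝ => τ - s) volume volume :=
    fun s => measurePreserving_sub_right volume s
  have hxc : MemLp (fun τ => (starRingEnd ℂ) (x τ)) 2 (volume : Measure ℝ) :=
    MemLp.of_le hx (RCLike.continuous_conj.comp_aestronglyMeasurable hx.1)
      (Filter.Eventually.of_forall fun τ => by simp)
  set X : Lp ℂ 2 (volume : Measure ℝ) := hxc.toLp _ with hX
  set P : Lp ℂ 2 (volume : Measure ℝ) := hΦ.toLp Φ with hP
  set cm : C(ℝ, C(ℝ, ℝ)) := ContinuousMap.curry ⟨fun p : ℝ × ℝ => p.2 - p.1,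
    (continuous_snd.sub continuous_fst)⟩ with hcm
  have hmp' : ∀ s : ℝ, MeasurePreserving (cm s) volume volume := fun s => hmp s
  set T : ℝ → Lp ℂ 2 (volume : Measure ℝ) :=
    fun s => Lp.compMeasurePreserving (cm s) (hmp' s) P with hT
  have hTcont : Continuous T := by
    rw [continuous_iff_continuousAt]
    intro s₀
    exact Filter.Tendsto.compMeasurePreservingLp tendsto_const_nhds
      (cm.continuous.tendsto s₀) hmp' (hmp' s₀) (by norm_num)
  have hGinner : ∀ s : ℝ, (∫ τ : ℝ, x τ * Φ (τ - s)) = inner (𝕜 := ℂ) X (T s) := by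
    intro s
    rw [L2.inner_def]
    refine integral_congr_ae ?_
    have h1 : (X : ℝ → ℂ) =ᵐ[volume] fun τ => (starRingEnd ℂ) (x τ) := MemLp.coeFn_toLp hxc
    have h2 : (T s : ℝ → ℂ) =ᵐ[volume] fun τ => Φ (τ - s) := by
      refine (Lp.coeFn_compMeasurePreserving P (hmp' s)).trans ?_
      have h3 : ((P : ℝ → ℂ) ∘ fun τ : ℝ => τ - s) =ᵐ[volume]
          (Φ ∘ fun τ : ℝ => τ - s) := by
        apply MeasureTheory.ae_eq_comp (f := fun τ : ℝ => τ - s)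
          (hmp s).measurable.aemeasurable
        rw [(hmp s).map_eq]
        exact MemLp.coeFn_toLp hΦ
      exact h3
    filter_upwards [h1, h2] with τ ha hb
    rw [RCLike.inner_apply, ha, hb, RCLike.conj_conj, mul_comm]
  have : Continuous fun s => inner (𝕜 := ℂ) X (T s) := continuous_const.inner hTcont
  exact (funext hGinner) ▸ this

lemma keyDeriv {x φ Φ : ℝ → ℂ} (hx : MemLp x 2 (volume : Measure ℝ))
    (hφΦ : ∀ σ : ℝ, HasDerivAt φ (Φ σ) σ) (hΦc : Continuous Φ)
    (hφ : MemLp φ 2 (volume : Measure ℝ)) (hΦ : MemLp Φ 2 (volume : Measure ℝ)) (t₀ : ℝ) :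
    HasDerivAt (fun t : ℝ => ∫ τ : ℝ, x τ * φ (τ - t))
      (-∫ τ : ℝ, x τ * Φ (τ - t₀)) t₀ := by
  set F : ℝ → ℂ := fun t => ∫ τ : ℝ, x τ * φ (τ - t) with hF
  set G : ℝ → ℂ := fun s => ∫ τ : ℝ, x τ * Φ (τ - s) with hG
  have hGc : Continuous G := Gcont hx hΦ
  have hxφ : ∀ s : ℝ, Integrable (fun τ => x τ * φ (τ - s)) volume :=
    fun s => l2mul hx (l2shift hφ s)
  -- Fubini swap
  have hswap : ∀ u : ℝ,
      (∫ τ : ℝ, ∫ s in t₀..u, x τ * Φ (τ - s)) = ∫ s in t₀..u, ∫ τ : ℝ, x τ * Φ (τ - s) := by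
    intro u
    simp only [intervalIntegral.intervalIntegral_eq_integral_uIoc, integral_smul]
    congr 1
    have hpi : Integrable (fun p : ℝ × ℝ => x p.2 * Φ (p.2 - p.1))
        ((volume.restrict (Set.uIoc t₀ u)).prod volume) := by
      rw [Set.uIoc]
      exact prodInt hx hΦc hΦ _ _
    exact (integral_integral_swap (f := fun s τ => x τ * Φ (τ - s)) hpi).symm
  -- key identity
  have hkey : ∀ u : ℝ, F u = F t₀ - ∫ s in t₀..u, G s := by
    intro u
    have hdiff : F u - F t₀ = -∫ s in t₀..u, G s := by
      calc F u - F t₀ = ∫ τ : ℝ, (x τ * φ (τ - u) - x τ * φ (τ - t₀)) :=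
            (integral_sub (hxφ u) (hxφ t₀)).symm
        _ = ∫ τ : ℝ, -∫ s in t₀..u, x τ * Φ (τ - s) := by
            refine integral_congr_ae (Filter.Eventually.of_forall fun τ => ?_)
            have hft : ∀ s : ℝ, HasDerivAt (fun s : ℝ => φ (τ - s)) (-Φ (τ - s)) s := by
              intro s
              have hinner : HasDerivAt (fun s : ℝ => τ - s) (-1) s :=
                (hasDerivAt_id s).const_sub τ
              have := HasDerivAt.scomp (𝕜 := ℝ) s (hφΦ (τ - s)) hinner
              simpa [Function.comp_def] using this
            have hI : IntervalIntegrable (fun s => -Φ (τ - s)) volume t₀ u :=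
              ((hΦc.comp (continuous_const.sub continuous_id)).neg).intervalIntegrable t₀ u
            have h2 := intervalIntegral.integral_eq_sub_of_hasDerivAt
              (fun s _ => hft s) hI
            rw [intervalIntegral.integral_neg] at h2
            have h3 : φ (τ - u) - φ (τ - t₀) = -∫ s in t₀..u, Φ (τ - s) := h2.symm
            show x τ * φ (τ - u) - x τ * φ (τ - t₀) = -∫ s in t₀..u, x τ * Φ (τ - s)
            rw [← mul_sub, h3, intervalIntegral.integral_const_mul, mul_neg]
        _ = -∫ τ : ℝ, ∫ s in t₀..u, x τ * Φ (τ - s) := by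
            rw [integral_neg]
        _ = -∫ s in t₀..u, ∫ τ : ℝ, x τ * Φ (τ - s) := by rw [hswap u]
        _ = -∫ s in t₀..u, G s := rfl
    linear_combination hdiff
  -- FTC1
  have hFTC : HasDerivAt (fun u : ℝ => ∫ s in t₀..u, G s) (G t₀) t₀ :=
    intervalIntegral.integral_hasDerivAt_right (hGc.intervalIntegrable t₀ t₀)
      (hGc.stronglyMeasurableAtFilter _ _) hGc.continuousAt
  have hd : HasDerivAt (fun u : ℝ => F t₀ - ∫ s in t₀..u, G s) (-G t₀) t₀ :=
    hFTC.const_sub (F t₀)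
  exact hd.congr_of_eventuallyEq (Filter.Eventually.of_forall fun u => hkey u)

/-- Time-invariant STFT:
`V^t_g x (t, ω) = ∫ τ, x τ * conj (g (τ - t)) * exp (-2πiω(τ - t))`. -/
noncomputable def stftTimeInv (g x : ℝ → ℂ) (t ω : ℝ) : ℂ :=
  ∫ τ : ℝ, x τ * (starRingEnd ℂ) (g (τ - t)) *
    Complex.exp (-2 * Real.pi * Complex.I * (ω : ℂ) * ((τ : ℂ) - (t : ℂ)))

/-- For `x ∈ L²` and `g` continuously differentiable with `g, g' ∈ L²`,
for every `ω` the map `t ↦ V^t_g x (t, ω)` is differentiable with derivative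
`∂_t V^t_g x (t, ω) = 2πiω · V^t_g x (t, ω) − V^t_{g'} x (t, ω)`. -/
theorem stftTimeInv_hasDerivAt_time
    (x g : ℝ → ℂ)
    (hx : MemLp x 2 (volume : Measure ℝ))
    (hg_smooth : ContDiff ℝ 1 g)
    (hg : MemLp g 2 (volume : Measure ℝ))
    (hg' : MemLp (deriv g) 2 (volume : Measure ℝ)) :
    ∀ ω t : ℝ,
      HasDerivAt (fun s : ℝ => stftTimeInv g x s ω)
        (2 * Real.pi * Complex.I * (ω : ℂ) * stftTimeInv g x t ω -
          stftTimeInv (deriv g) x t ω) t := by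
  intro ω t₀
  have hgc : Continuous g := hg_smooth.continuous
  have hgc' : Continuous (deriv g) := hg_smooth.continuous_deriv le_rfl
  set c : ℂ := -2 * (π : ℂ) * I * (ω : ℂ) with hc
  set e : ℝ → ℂ := fun σ => Complex.exp (c * (σ : ℂ)) with he
  have hec : Continuous e := Complex.continuous_exp.comp (continuous_const.mul
    Complex.continuous_ofReal)
  have hen : ∀ σ : ℝ, ‖e σ‖ = 1 := by
    intro σ
    have h1 : c * (σ : ℂ) = ((-2 * π * ω * σ : ℝ) : ℂ) * I := by rw [hc]; push_cast; ring
    rw [he]; simp only [h1]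
    rw [Complex.norm_exp_ofReal_mul_I]
  -- membership helper
  have mem2 : ∀ (h : ℝ → ℂ), Continuous h → MemLp h 2 (volume : Measure ℝ) →
      MemLp (fun σ => (starRingEnd ℂ) (h σ) * e σ) 2 (volume : Measure ℝ) := by
    intro h hc2 hm
    refine MemLp.of_le hm (((RCLike.continuous_conj).comp hc2).mul hec).aestronglyMeasurable
      (Filter.Eventually.of_forall fun σ => ?_)
    rw [norm_mul, hen σ, mul_one, RCLike.norm_conj]
  set φ : ℝ → ℂ := fun σ => (starRingEnd ℂ) (g σ) * e σ with hφ
  set Φ : ℝ → ℂ := fun σ => (starRingEnd ℂ) (deriv g σ) * e σ +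
    c * ((starRingEnd ℂ) (g σ) * e σ) with hΦ
  have hφm : MemLp φ 2 (volume : Measure ℝ) := mem2 g hgc hg
  have hΦm : MemLp Φ 2 (volume : Measure ℝ) :=
    (mem2 (deriv g) hgc' hg').add ((mem2 g hgc hg).const_mul c)
  have hΦc : Continuous Φ := by
    refine (((RCLike.continuous_conj).comp hgc').mul hec).add
      (continuous_const.mul (((RCLike.continuous_conj).comp hgc).mul hec))
  have hφΦ : ∀ σ : ℝ, HasDerivAt φ (Φ σ) σ := by
    intro σ
    have h1 : HasDerivAt (fun σ : ℝ => (starRingEnd ℂ) (g σ)) ((starRingEnd ℂ) (deriv g σ)) σ := by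
      have := ((hg_smooth.differentiable one_ne_zero σ).hasDerivAt).star
      simpa [RCLike.star_def] using this
    have h2 : HasDerivAt (fun σ : ℝ => c * (σ : ℂ)) c σ := by
      have := ((hasDerivAt_id σ).ofReal_comp).const_mul c
      simpa using this
    have h3 : HasDerivAt e (e σ * c) σ := h2.cexp
    have h4 := h1.mul h3
    have h5 : (starRingEnd ℂ) (deriv g σ) * e σ + (starRingEnd ℂ) (g σ) * (e σ * c) = Φ σ := by
      rw [hΦ]; ring
    exact h5 ▸ h4
  -- derivative of the abstract integral
  have hmain := keyDeriv hx hφΦ hΦc hφm hΦm t₀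
  -- identification with stftTimeInv
  have hstft : ∀ (h : ℝ → ℂ) (t : ℝ), stftTimeInv h x t ω =
      ∫ τ : ℝ, x τ * ((starRingEnd ℂ) (h (τ - t)) * e (τ - t)) := by
    intro h t
    unfold stftTimeInv
    refine integral_congr_ae (Filter.Eventually.of_forall fun τ => ?_)
    rw [mul_assoc, he, hc]
    congr 2
    push_cast
    ring
  have hint1 : Integrable (fun τ => x τ *
      ((starRingEnd ℂ) (deriv g (τ - t₀)) * e (τ - t₀))) volume :=
    l2mul hx (l2shift (mem2 (deriv g) hgc' hg') t₀)
  have hint2 : Integrable (fun τ => x τ *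
      ((starRingEnd ℂ) (g (τ - t₀)) * e (τ - t₀))) volume :=
    l2mul hx (l2shift (mem2 g hgc hg) t₀)
  have hsplit : (∫ τ : ℝ, x τ * Φ (τ - t₀)) =
      (∫ τ : ℝ, x τ * ((starRingEnd ℂ) (deriv g (τ - t₀)) * e (τ - t₀))) +
        c * ∫ τ : ℝ, x τ * ((starRingEnd ℂ) (g (τ - t₀)) * e (τ - t₀)) := by
    rw [← integral_const_mul, ← integral_add hint1 (hint2.const_mul c)]
    refine integral_congr_ae (Filter.Eventually.of_forall fun τ => ?_)
    rw [hΦ]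
    ring
  have heqfun : (fun s : ℝ => stftTimeInv g x s ω) =
      fun t : ℝ => ∫ τ : ℝ, x τ * φ (τ - t) := by
    funext s
    rw [hstft g s]
  rw [heqfun]
  convert hmain using 1
  rw [hstft g t₀, hstft (deriv g) t₀, hsplit, hc]
  push_cast
  ring
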